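/- Nikiforov's lemma: Let A be an irreducible nonnegative symmetric n×n real matrix, let R be the diagonal matrix of its row sums R_{ii} = Σ_j A_{ij}, and let p > 1. Then the spectral radius satisfies ρ(R + (1/(p-1)) A) ≥ (p/(p-1)) ρ(A), with equality if and only if all row sums of A are equal. -/

import Mathlib

open Matrix Finset

noncomputable def specRad {n : ℕ} (M : Matrix (Fin n) (Fin n) ℂ) : ℝ :=
  sSup {r : ℝ | ∃ μ : ℂ, r = ‖μ‖ ∧ ∃ v : Fin n → ℂ, v ≠ 0 ∧ M.mulVec v = μ • v}

namespace Nik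
variable {n : ℕ}

def ES (M : Matrix (Fin n) (Fin n) ℂ) : Set ℝ :=
  {r : ℝ | ∃ μ : ℂ, r = ‖μ‖ ∧ ∃ v : Fin n → ℂ, v ≠ 0 ∧ M.mulVec v = μ • v}

lemma specRad_def (M : Matrix (Fin n) (Fin n) ℂ) : specRad M = sSup (ES M) := rfl

lemma mem_ES_of_real (M : Matrix (Fin n) (Fin n) ℝ) {ν : ℝ} {v : Fin n → ℝ}
    (hv : v ≠ 0) (hev : M *ᵥ v = ν • v) : |ν| ∈ ES (M.map Complex.ofReal) := by
  refine ⟨(ν : ℂ), by simp [Complex.norm_real, Real.norm_eq_abs], fun i => (v i : ℂ), ?_, ?_⟩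
  · intro h
    apply hv
    funext i
    have := congrFun h i
    simpa using this
  · funext i
    have h := congrFun hev i
    simp only [mulVec, dotProduct, Pi.smul_apply, smul_eq_mul] at h ⊢
    simp only [map_apply]
    have h2 : ((∑ x, M i x * v x : ℝ) : ℂ) = ((ν * v i : ℝ) : ℂ) := by rw [h]
    push_cast at h2
    exact h2

lemma exists_spectral (M : Matrix (Fin n) (Fin n) ℝ) (hsym : M.IsSymm) :
    ∃ (U : Matrix (Fin n) (Fin n) ℝ) (d : Fin n → ℝ),
      U * Uᵀ = 1 ∧ Uᵀ * U = 1 ∧ M = U * diagonal d * Uᵀ := by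
  have hH : M.IsHermitian := hsym
  refine ⟨hH.eigenvectorUnitary, hH.eigenvalues, ?_, ?_, ?_⟩
  · have h := (Matrix.mem_unitaryGroup_iff).mp (hH.eigenvectorUnitary).2
    simpa [Matrix.star_eq_conjTranspose, Matrix.conjTranspose_eq_transpose_of_trivial] using h
  · have h := (Matrix.mem_unitaryGroup_iff').mp (hH.eigenvectorUnitary).2
    simpa [Matrix.star_eq_conjTranspose, Matrix.conjTranspose_eq_transpose_of_trivial] using h
  · have h := hH.spectral_theorem
    simpa [Matrix.star_eq_conjTranspose, Matrix.conjTranspose_eq_transpose_of_trivial,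
      Function.comp] using h

lemma dot_pos {x : Fin n → ℝ} (hx : x ≠ 0) : 0 < x ⬝ᵥ x := by
  have hnn : ∀ i ∈ univ, (0:ℝ) ≤ x i * x i := fun i _ => mul_self_nonneg _
  rcases (Finset.sum_nonneg hnn).lt_or_eq with h | h
  · exact h
  · exfalso
    apply hx
    funext i
    have := (Finset.sum_eq_zero_iff_of_nonneg hnn).mp h.symm i (mem_univ i)
    exact mul_self_eq_zero.mp this

theorem char (M : Matrix (Fin n) (Fin n) ℝ) (hsym : M.IsSymm) (hn : 0 < n) :
    ∃ ρ : ℝ, specRad (M.map Complex.ofReal) = ρ ∧ 0 ≤ ρ ∧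
      (∃ (v : Fin n → ℝ) (ν : ℝ), v ≠ 0 ∧ |ν| = ρ ∧ M *ᵥ v = ν • v) ∧
      (∀ (ν : ℝ) (z : Fin n → ℝ), z ≠ 0 → M *ᵥ z = ν • z → |ν| ≤ ρ) ∧
      (∀ x : Fin n → ℝ, x ⬝ᵥ M *ᵥ x ≤ ρ * (x ⬝ᵥ x)) ∧
      (∀ x : Fin n → ℝ, x ⬝ᵥ M *ᵥ x = ρ * (x ⬝ᵥ x) → M *ᵥ x = ρ • x) := by
  obtain ⟨U, d, hU1, hU2, hfac⟩ := exists_spectral M hsym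
  haveI : Nonempty (Fin n) := ⟨⟨0, hn⟩⟩
  obtain ⟨i0, -, hmax⟩ :=
    Finset.exists_max_image (univ : Finset (Fin n)) (fun i => |d i|) univ_nonempty
  set ρ := |d i0| with hρdef
  have hρ0 : 0 ≤ ρ := abs_nonneg _
  have habs : ∀ i, |d i| ≤ ρ := fun i => hmax i (mem_univ i)
  have hdle : ∀ i, d i ≤ ρ := fun i => (le_abs_self _).trans (habs i)
  -- coordinate computations
  have hMx : ∀ x : Fin n → ℝ, M *ᵥ x = U *ᵥ (fun i => d i * (Uᵀ *ᵥ x) i) := by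
    intro x
    rw [hfac, ← mulVec_mulVec, ← mulVec_mulVec]
    have hd : diagonal d *ᵥ (Uᵀ *ᵥ x) = fun i => d i * (Uᵀ *ᵥ x) i := by
      funext i
      exact mulVec_diagonal d (Uᵀ *ᵥ x) i
    rw [hd]
  have hUy : ∀ x : Fin n → ℝ, U *ᵥ (Uᵀ *ᵥ x) = x := by
    intro x
    rw [mulVec_mulVec, hU1, one_mulVec]
  have hdotU : ∀ (x z : Fin n → ℝ), x ⬝ᵥ (U *ᵥ z) = (Uᵀ *ᵥ x) ⬝ᵥ z := by
    intro x z
    rw [dotProduct_mulVec, ← mulVec_transpose]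
  have hq : ∀ x : Fin n → ℝ, x ⬝ᵥ M *ᵥ x = ∑ i, d i * (Uᵀ *ᵥ x) i ^ 2 := by
    intro x
    rw [hMx, hdotU]
    simp only [dotProduct]
    exact Finset.sum_congr rfl fun i _ => by ring
  have hxx : ∀ x : Fin n → ℝ, x ⬝ᵥ x = ∑ i, (Uᵀ *ᵥ x) i ^ 2 := by
    intro x
    have h := hdotU x (Uᵀ *ᵥ x)
    rw [hUy] at h
    rw [h]
    simp only [dotProduct, sq]
  have hray : ∀ x : Fin n → ℝ, x ⬝ᵥ M *ᵥ x ≤ ρ * (x ⬝ᵥ x) := by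
    intro x
    rw [hq, hxx, Finset.mul_sum]
    exact Finset.sum_le_sum fun i _ => mul_le_mul_of_nonneg_right (hdle i) (sq_nonneg _)
  have hub : ∀ (ν : ℝ) (z : Fin n → ℝ), z ≠ 0 → M *ᵥ z = ν • z → |ν| ≤ ρ := by
    intro ν z hz hev
    have ht : 0 < z ⬝ᵥ z := dot_pos hz
    have h1 : z ⬝ᵥ M *ᵥ z = ν * (z ⬝ᵥ z) := by
      rw [hev, dotProduct_smul, smul_eq_mul]
    have h2 : |ν| * (z ⬝ᵥ z) ≤ ρ * (z ⬝ᵥ z) := by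
      calc |ν| * (z ⬝ᵥ z) = |z ⬝ᵥ M *ᵥ z| := by rw [h1, abs_mul, abs_of_pos ht]
        _ = |∑ i, d i * (Uᵀ *ᵥ z) i ^ 2| := by rw [hq]
        _ ≤ ∑ i, |d i * (Uᵀ *ᵥ z) i ^ 2| := Finset.abs_sum_le_sum_abs _ _
        _ ≤ ∑ i, ρ * (Uᵀ *ᵥ z) i ^ 2 := Finset.sum_le_sum fun i _ => by
              rw [abs_mul, abs_of_nonneg (sq_nonneg ((Uᵀ *ᵥ z) i))]
              exact mul_le_mul_of_nonneg_right (habs i) (sq_nonneg _)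
        _ = ρ * (z ⬝ᵥ z) := by rw [hxx, Finset.mul_sum]
    exact le_of_mul_le_mul_right h2 ht
  have heqcase : ∀ x : Fin n → ℝ, x ⬝ᵥ M *ᵥ x = ρ * (x ⬝ᵥ x) → M *ᵥ x = ρ • x := by
    intro x hx
    have hzero : ∑ i, (ρ - d i) * (Uᵀ *ᵥ x) i ^ 2 = 0 := by
      have h := hx
      rw [hq, hxx, Finset.mul_sum] at h
      have : ∑ i, (ρ - d i) * (Uᵀ *ᵥ x) i ^ 2
          = ∑ i, ρ * (Uᵀ *ᵥ x) i ^ 2 - ∑ i, d i * (Uᵀ *ᵥ x) i ^ 2 := by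
        rw [← Finset.sum_sub_distrib]
        exact Finset.sum_congr rfl fun i _ => by ring
      rw [this, h, sub_self]
    have hterm := (Finset.sum_eq_zero_iff_of_nonneg
      (fun i _ => mul_nonneg (sub_nonneg.mpr (hdle i)) (sq_nonneg _))).mp hzero
    have hdy : ∀ i, d i * (Uᵀ *ᵥ x) i = ρ * (Uᵀ *ᵥ x) i := by
      intro i
      rcases mul_eq_zero.mp (hterm i (mem_univ i)) with h' | h'
      · rw [sub_eq_zero.mp h']
      · rw [pow_eq_zero_iff (two_ne_zero)] at h'
        rw [h', mul_zero, mul_zero]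
    rw [hMx]
    have h3 : (fun i => d i * (Uᵀ *ᵥ x) i) = ρ • (Uᵀ *ᵥ x) := by
      funext i
      rw [hdy]
      rfl
    rw [h3, mulVec_smul, hUy]
  -- eigenvector for d i0 : column i0 of U
  have hMU : M * U = U * diagonal d := by
    rw [hfac, mul_assoc (U * diagonal d) Uᵀ U, hU2, mul_one]
  have hcol_ev : M *ᵥ (fun i => U i i0) = d i0 • (fun i => U i i0) := by
    have he : ∃ e : Fin n → ℝ, e = Pi.single i0 1 := ⟨_, rfl⟩
    obtain ⟨e, hedef⟩ := he
    have h1 : (fun i => U i i0) = U *ᵥ e := by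
      funext i
      rw [hedef]
      simp [mulVec_single]
    rw [h1, mulVec_mulVec, hMU, ← mulVec_mulVec, hedef, diagonal_mulVec_single]
    have h2 : (Pi.single i0 (d i0 * 1) : Fin n → ℝ) = d i0 • (Pi.single i0 1 : Fin n → ℝ) := by
      funext j
      by_cases hj : j = i0
      · subst hj; simp
      · simp [Pi.single_apply, hj]
    rw [h2, mulVec_smul]
  have hcol0 : (fun i => U i i0) ≠ 0 := by
    intro h
    have h1 : (Uᵀ * U) i0 i0 = 1 := by rw [hU2]; simp
    rw [mul_apply] at h1
    have h2 : ∀ l, U l i0 = 0 := fun l => congrFun h l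
    simp [transpose_apply, h2] at h1
  have hmem : ρ ∈ ES (M.map Complex.ofReal) := mem_ES_of_real M hcol0 hcol_ev
  have hESub : ∀ r ∈ ES (M.map Complex.ofReal), r ≤ ρ := by
    rintro r ⟨μ, rfl, w, hw0, hw⟩
    have hwc : ∀ i, ∑ j, (M i j : ℂ) * w j = μ * w i := by
      intro i
      have h := congrFun hw i
      simpa [mulVec, dotProduct, map_apply, smul_eq_mul] using h
    have him : μ.im = 0 := by
      set T : ℂ := ∑ i, (starRingEnd ℂ) (w i) * w i with hTdef
      have hT : T = ((∑ i, Complex.normSq (w i) : ℝ) : ℂ) := by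
        rw [hTdef]
        push_cast
        exact Finset.sum_congr rfl fun i _ => by rw [mul_comm, Complex.mul_conj]
      have hTpos : (0:ℝ) < ∑ i, Complex.normSq (w i) := by
        have hnn : ∀ i ∈ univ, (0:ℝ) ≤ Complex.normSq (w i) :=
          fun i _ => Complex.normSq_nonneg _
        rcases (Finset.sum_nonneg hnn).lt_or_eq with h | h
        · exact h
        · exfalso
          apply hw0
          funext i
          exact Complex.normSq_eq_zero.mp
            ((Finset.sum_eq_zero_iff_of_nonneg hnn).mp h.symm i (mem_univ i))
      set q : ℂ := ∑ i, ∑ j, (starRingEnd ℂ) (w i) * ((M i j : ℂ) * w j) with hqdef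
      have hq1 : q = μ * T := by
        rw [hqdef, hTdef, Finset.mul_sum]
        refine Finset.sum_congr rfl fun i _ => ?_
        rw [← Finset.mul_sum, hwc i]
        ring
      have hqconj : (starRingEnd ℂ) q = q := by
        have e1 : (starRingEnd ℂ) q
            = ∑ i, ∑ j, w i * ((M i j : ℂ) * (starRingEnd ℂ) (w j)) := by
          rw [hqdef, map_sum]
          refine Finset.sum_congr rfl fun i _ => ?_
          rw [map_sum]
          refine Finset.sum_congr rfl fun j _ => ?_
          simp [Complex.conj_ofReal]
        rw [e1, hqdef, Finset.sum_comm]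
        refine Finset.sum_congr rfl fun j _ => ?_
        refine Finset.sum_congr rfl fun i _ => ?_
        have hMs : M i j = M j i := by
          have := congrFun (congrFun hsym j) i
          simpa [transpose_apply] using this
        rw [hMs]
        ring
      rw [hq1] at hqconj
      rw [_root_.map_mul, hT, Complex.conj_ofReal] at hqconj
      have hTne : ((∑ i, Complex.normSq (w i) : ℝ) : ℂ) ≠ 0 := by
        rw [Ne, Complex.ofReal_eq_zero]
        exact ne_of_gt hTpos
      have := mul_right_cancel₀ hTne hqconj
      exact Complex.conj_eq_iff_im.mp this
    -- extract real eigenvector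
    have hre : M *ᵥ (fun i => (w i).re) = μ.re • (fun i => (w i).re) := by
      funext i
      have h := congrArg Complex.re (hwc i)
      rw [Complex.re_sum] at h
      simp only [Complex.mul_re, Complex.ofReal_re, Complex.ofReal_im, zero_mul,
        sub_zero, him, mul_zero] at h
      simp only [mulVec, dotProduct, Pi.smul_apply, smul_eq_mul]
      exact h
    have hie : M *ᵥ (fun i => (w i).im) = μ.re • (fun i => (w i).im) := by
      funext i
      have h := congrArg Complex.im (hwc i)
      rw [Complex.im_sum] at h
      simp only [Complex.mul_im, Complex.ofReal_re, Complex.ofReal_im, zero_mul,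
        add_zero, him, mul_zero, zero_add] at h
      simp only [mulVec, dotProduct, Pi.smul_apply, smul_eq_mul]
      exact h
    have hnorm : ‖μ‖ = |μ.re| := by
      have hμ : μ = ((μ.re : ℝ) : ℂ) := Complex.ext (by simp) (by simp [him])
      rw [hμ]
      simp [Complex.norm_real, Real.norm_eq_abs]
    rw [hnorm]
    by_cases hu0 : (fun i => (w i).re) = 0
    · have hv0 : (fun i => (w i).im) ≠ 0 := by
        intro hv0
        apply hw0
        funext i
        have h1 := congrFun hu0 i
        have h2 := congrFun hv0 i
        simp only [Pi.zero_apply] at h1 h2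
        exact Complex.ext h1 h2
      exact hub μ.re _ hv0 hie
    · exact hub μ.re _ hu0 hre
  refine ⟨ρ, ?_, hρ0, ⟨(fun i => U i i0), d i0, hcol0, rfl, hcol_ev⟩, hub, hray, heqcase⟩
  rw [specRad_def]
  exact IsGreatest.csSup_eq ⟨hmem, hESub⟩

end Nik
theorem stmt6 {n : ℕ} (A : Matrix (Fin n) (Fin n) ℝ)
    (hsym : A.IsSymm) (hnn : ∀ i j, 0 ≤ A i j)
    (hirr : ∀ i j, ∃ k : ℕ, 0 < (A ^ k) i j)
    (p : ℝ) (hp : 1 < p) :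
    (p / (p - 1)) * specRad (A.map Complex.ofReal) ≤
        specRad (((Matrix.diagonal fun i => ∑ j, A i j) + (1 / (p - 1)) • A).map
          Complex.ofReal) ∧
    (specRad (((Matrix.diagonal fun i => ∑ j, A i j) + (1 / (p - 1)) • A).map
          Complex.ofReal) = (p / (p - 1)) * specRad (A.map Complex.ofReal) ↔
      ∀ i j, (∑ k, A i k) = ∑ k, A j k) := by
  rcases Nat.eq_zero_or_pos n with hn0 | hn
  · subst hn0
    have hz : ∀ M : Matrix (Fin 0) (Fin 0) ℂ, specRad M = 0 := by
      intro M
      have he : {r : ℝ | ∃ μ : ℂ, r = ‖μ‖ ∧ ∃ v : Fin 0 → ℂ, v ≠ 0 ∧ M.mulVec v = μ • v}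
          = ∅ := by
        ext r
        simp only [Set.mem_setOf_eq, Set.mem_empty_iff_false, iff_false, not_exists]
        rintro μ ⟨-, v, hv, -⟩
        exact hv (Subsingleton.elim v 0)
      rw [specRad, he, Real.sSup_empty]
    refine ⟨by rw [hz, hz]; simp, ?_, ?_⟩
    · intro _ i j
      exact i.elim0
    · intro _
      rw [hz, hz]
      ring
  · set c := 1 / (p - 1) with hcdef
    have hp1 : (0:ℝ) < p - 1 := by linarith
    have hc : 0 < c := by rw [hcdef]; positivity
    set r : Fin n → ℝ := fun i => ∑ j, A i j with hrdef
    set B := diagonal r + c • A with hBdef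
    have hri : ∀ i, r i = ∑ k, A i k := fun i => rfl
    have hAs : ∀ i j, A i j = A j i := by
      intro i j
      have := congrFun (congrFun hsym j) i
      simpa [transpose_apply] using this
    have hBsym : B.IsSymm := by
      rw [Matrix.IsSymm, hBdef, transpose_add, transpose_smul, diagonal_transpose, hsym]
    obtain ⟨ρA, hρA, hρA0, ⟨v, ν, hv0, hνa, hν⟩, hubA, hrayA, heqA⟩ := Nik.char A hsym hn
    obtain ⟨ρB, hρB, hρB0, ⟨vB, νB, hvB0, hνBa, hνB⟩, hubB, hrayB, -⟩ := Nik.char B hBsym hn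
    set x : Fin n → ℝ := fun i => |v i| with hxdef
    have hxnn : ∀ i, 0 ≤ x i := fun i => abs_nonneg _
    have hx0 : x ≠ 0 := by
      intro h
      apply hv0
      funext i
      have := congrFun h i
      simpa [hxdef, abs_eq_zero] using this
    have ht : 0 < x ⬝ᵥ x := Nik.dot_pos hx0
    have hvvxx : v ⬝ᵥ v = x ⬝ᵥ x := by
      simp only [dotProduct, hxdef]
      exact Finset.sum_congr rfl fun i _ => (abs_mul_abs_self _).symm
    -- Perron step
    have hlow : ρA * (x ⬝ᵥ x) ≤ x ⬝ᵥ A *ᵥ x := by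
      have h1 : v ⬝ᵥ A *ᵥ v = ν * (v ⬝ᵥ v) := by rw [hν, dotProduct_smul, smul_eq_mul]
      have h2 : |v ⬝ᵥ A *ᵥ v| = ρA * (x ⬝ᵥ x) := by
        rw [h1, abs_mul, hνa]
        congr 1
        rw [abs_of_nonneg (by rw [hvvxx]; exact le_of_lt ht), hvvxx]
      have h3 : |v ⬝ᵥ A *ᵥ v| ≤ x ⬝ᵥ A *ᵥ x := by
        calc |v ⬝ᵥ A *ᵥ v| ≤ ∑ i, |v i * (A *ᵥ v) i| := Finset.abs_sum_le_sum_abs _ _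
          _ ≤ ∑ i, x i * (A *ᵥ x) i := by
              refine Finset.sum_le_sum fun i _ => ?_
              rw [abs_mul]
              refine mul_le_mul_of_nonneg_left ?_ (abs_nonneg _)
              calc |(A *ᵥ v) i| = |∑ j, A i j * v j| := rfl
                _ ≤ ∑ j, |A i j * v j| := Finset.abs_sum_le_sum_abs _ _
                _ = ∑ j, A i j * x j := Finset.sum_congr rfl fun j _ => by
                    rw [abs_mul, abs_of_nonneg (hnn i j)]
                _ = (A *ᵥ x) i := rfl
          _ = x ⬝ᵥ A *ᵥ x := rfl
      linarith [h2 ▸ h3]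
    have hxAx : x ⬝ᵥ A *ᵥ x = ρA * (x ⬝ᵥ x) := le_antisymm (hrayA x) hlow
    have hPer : A *ᵥ x = ρA • x := heqA x hxAx
    -- quadratic form of B
    have hBq : ∀ z : Fin n → ℝ,
        z ⬝ᵥ B *ᵥ z = (∑ i, r i * z i ^ 2) + c * (z ⬝ᵥ A *ᵥ z) := by
      intro z
      rw [hBdef, add_mulVec, dotProduct_add, smul_mulVec, dotProduct_smul, smul_eq_mul]
      congr 1
      simp only [dotProduct]
      exact Finset.sum_congr rfl fun i _ => by rw [mulVec_diagonal]; ring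
    -- Dirichlet identity
    have hAxd : x ⬝ᵥ A *ᵥ x = ∑ i, ∑ j, A i j * (x i * x j) := by
      simp only [dotProduct, mulVec, Finset.mul_sum]
      exact Finset.sum_congr rfl fun i _ => Finset.sum_congr rfl fun j _ => by ring
    have h1s : ∑ i, ∑ j, A i j * x i ^ 2 = ∑ i, r i * x i ^ 2 := by
      refine Finset.sum_congr rfl fun i _ => ?_
      rw [hri, Finset.sum_mul]
    have h2s : ∑ i, ∑ j, A i j * x j ^ 2 = ∑ i, r i * x i ^ 2 := by
      rw [Finset.sum_comm]
      refine Finset.sum_congr rfl fun j _ => ?_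
      calc ∑ i, A i j * x j ^ 2 = ∑ i, A j i * x j ^ 2 :=
            Finset.sum_congr rfl fun i _ => by rw [hAs i j]
        _ = r j * x j ^ 2 := by rw [hri, Finset.sum_mul]
    have hGid : ∑ i, ∑ j, A i j * (x i - x j) ^ 2
        = 2 * (∑ i, r i * x i ^ 2) - 2 * (x ⬝ᵥ A *ᵥ x) := by
      have hsplit : (∑ i, ∑ j, A i j * (x i - x j) ^ 2)
          = (∑ i, ∑ j, A i j * x i ^ 2) + (∑ i, ∑ j, A i j * x j ^ 2)
            - 2 * (∑ i, ∑ j, A i j * (x i * x j)) := by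
        rw [Finset.mul_sum, ← Finset.sum_add_distrib, ← Finset.sum_sub_distrib]
        refine Finset.sum_congr rfl fun i _ => ?_
        rw [Finset.mul_sum, ← Finset.sum_add_distrib, ← Finset.sum_sub_distrib]
        exact Finset.sum_congr rfl fun j _ => by ring
      rw [hsplit, h1s, h2s, hAxd]
      ring
    have hG0 : 0 ≤ ∑ i, ∑ j, A i j * (x i - x j) ^ 2 :=
      Finset.sum_nonneg fun i _ => Finset.sum_nonneg fun j _ =>
        mul_nonneg (hnn i j) (sq_nonneg _)
    have hrx : ρA * (x ⬝ᵥ x) ≤ ∑ i, r i * x i ^ 2 := by nlinarith [hGid, hxAx, hG0]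
    have hmain : (1 + c) * ρA ≤ ρB := by
      have h1 : x ⬝ᵥ B *ᵥ x ≤ ρB * (x ⬝ᵥ x) := hrayB x
      have h2 : x ⬝ᵥ B *ᵥ x = (∑ i, r i * x i ^ 2) + c * (ρA * (x ⬝ᵥ x)) := by
        rw [hBq, hxAx]
      have h3 : (1 + c) * ρA * (x ⬝ᵥ x) ≤ ρB * (x ⬝ᵥ x) := by nlinarith
      exact le_of_mul_le_mul_right h3 ht
    have hpc : p / (p - 1) = 1 + c := by
      rw [hcdef]
      field_simp
      ring
    -- powers of A
    have hpow_nn : ∀ (k : ℕ) (i j : Fin n), 0 ≤ (A ^ k) i j := by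
      intro k
      induction k with
      | zero =>
          intro i j
          rw [pow_zero, one_apply]
          split <;> norm_num
      | succ k ih =>
          intro i j
          rw [pow_succ, mul_apply]
          exact Finset.sum_nonneg fun l _ => mul_nonneg (ih i l) (hnn l j)
    have hpow_vec : ∀ k : ℕ, (A ^ k) *ᵥ x = (ρA ^ k) • x := by
      intro k
      induction k with
      | zero => simp
      | succ k ih =>
          rw [pow_succ', ← mulVec_mulVec, ih, mulVec_smul, hPer, smul_smul, ← pow_succ]
    have hxpos : ∀ i, 0 < x i := by
      obtain ⟨j0, hj0⟩ : ∃ j0, x j0 ≠ 0 := by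
        by_contra h
        push_neg at h
        exact hx0 (funext h)
      have hj0p : 0 < x j0 := (hxnn j0).lt_of_ne (Ne.symm hj0)
      intro i
      obtain ⟨k, hk⟩ := hirr i j0
      have h1 : (A ^ k) i j0 * x j0 ≤ ((A ^ k) *ᵥ x) i := by
        have : ((A ^ k) *ᵥ x) i = ∑ l, (A ^ k) i l * x l := rfl
        rw [this]
        exact Finset.single_le_sum
          (fun l _ => mul_nonneg (hpow_nn k i l) (hxnn l)) (Finset.mem_univ j0)
      rw [hpow_vec k] at h1
      have h2 : 0 < ρA ^ k * x i := by
        have := mul_pos hk hj0p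
        have h3 : (ρA ^ k • x) i = ρA ^ k * x i := rfl
        rw [h3] at h1
        linarith
      rcases (hxnn i).lt_or_eq with h | h
      · exact h
      · exfalso
        rw [← h, mul_zero] at h2
        exact lt_irrefl 0 h2
    refine ⟨?_, ?_, ?_⟩
    · rw [hρA, hρB, hpc]
      exact hmain
    · -- equality implies constant row sums
      intro heq
      rw [hρA, hρB, hpc] at heq
      have hG : ∑ i, ∑ j, A i j * (x i - x j) ^ 2 = 0 := by
        have h1 : x ⬝ᵥ B *ᵥ x ≤ ρB * (x ⬝ᵥ x) := hrayB x
        have h2 : x ⬝ᵥ B *ᵥ x = (∑ i, r i * x i ^ 2) + c * (ρA * (x ⬝ᵥ x)) := by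
          rw [hBq, hxAx]
        nlinarith [hGid, hxAx]
      have hterm : ∀ i j, A i j * (x i - x j) ^ 2 = 0 := by
        have houter := (Finset.sum_eq_zero_iff_of_nonneg
          (fun i (_ : i ∈ Finset.univ) => Finset.sum_nonneg fun j _ =>
            mul_nonneg (hnn i j) (sq_nonneg (x i - x j)))).mp hG
        intro i j
        exact (Finset.sum_eq_zero_iff_of_nonneg
          (fun j (_ : j ∈ Finset.univ) => mul_nonneg (hnn i j) (sq_nonneg (x i - x j)))).mp
          (houter i (Finset.mem_univ i)) j (Finset.mem_univ j)
      have hstep : ∀ i j, 0 < A i j → x i = x j := by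
        intro i j hA
        have := hterm i j
        rcases mul_eq_zero.mp this with h | h
        · exact absurd h (ne_of_gt hA)
        · have := pow_eq_zero_iff (two_ne_zero) |>.mp h
          linarith [sub_eq_zero.mp this]
      have hP : ∀ (k : ℕ) (i j : Fin n), 0 < (A ^ k) i j → x i = x j := by
        intro k
        induction k with
        | zero =>
            intro i j h
            rw [pow_zero, one_apply] at h
            split at h
            · subst ‹i = j›; rfl
            · exact absurd h (lt_irrefl 0)
        | succ k ih =>
            intro i j h
            rw [pow_succ', mul_apply] at h
            obtain ⟨l, hl⟩ : ∃ l, 0 < A i l * (A ^ k) l j := by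
              by_contra hcon
              push_neg at hcon
              have : ∑ l, A i l * (A ^ k) l j ≤ 0 :=
                Finset.sum_nonpos fun l _ => hcon l
              linarith
            have hAl : 0 < A i l := by
              rcases (hnn i l).lt_or_eq with h' | h'
              · exact h'
              · exfalso; rw [← h', zero_mul] at hl; exact lt_irrefl 0 hl
            have hkl : 0 < (A ^ k) l j := by
              rcases (hpow_nn k l j).lt_or_eq with h' | h'
              · exact h'
              · exfalso; rw [← h', mul_zero] at hl; exact lt_irrefl 0 hl
            exact (hstep i l hAl).trans (ih l j hkl)
      have hconst : ∀ i j, x i = x j := by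
        intro i j
        obtain ⟨k, hk⟩ := hirr i j
        exact hP k i j hk
      intro i j
      have hrρ : ∀ i, r i = ρA := by
        intro i
        have h1 := congrFun hPer i
        have h2 : (A *ᵥ x) i = ∑ l, A i l * x l := rfl
        have h3 : ∑ l, A i l * x l = r i * x i := by
          rw [hri, Finset.sum_mul]
          exact Finset.sum_congr rfl fun l _ => by rw [hconst l i]
        have h4 : (ρA • x) i = ρA * x i := rfl
        rw [h2, h3, h4] at h1
        exact mul_right_cancel₀ (ne_of_gt (hxpos i)) h1
      rw [← hri i, ← hri j, hrρ i, hrρ j]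
    · -- constant row sums imply equality
      intro hrs
      have i0 : Fin n := ⟨0, hn⟩
      have hrc : ∀ i j, r i = r j := by
        intro i j
        rw [hri, hri]
        exact hrs i j
      set s := r i0 with hsdef
      have hone0 : (fun _ : Fin n => (1:ℝ)) ≠ 0 := by
        intro h
        have := congrFun h i0
        norm_num at this
      have hone : A *ᵥ (fun _ : Fin n => (1:ℝ)) = s • (fun _ : Fin n => (1:ℝ)) := by
        funext i
        have h1 : (A *ᵥ (fun _ : Fin n => (1:ℝ))) i = ∑ j, A i j * 1 := rfl
        have h2 : (s • (fun _ : Fin n => (1:ℝ))) i = s * 1 := rfl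
        rw [h1, h2]
        simp only [mul_one]
        rw [← hri i, hrc i i0]
      have hs0 : 0 ≤ s := by
        rw [hsdef, hri]
        exact Finset.sum_nonneg fun j _ => hnn i0 j
      -- ρA = s by summing the Perron eigenvector equation
      have hsumx : 0 < ∑ i, x i := by
        have hnn' : ∀ i ∈ Finset.univ, (0:ℝ) ≤ x i := fun i _ => hxnn i
        rcases (Finset.sum_nonneg hnn').lt_or_eq with h | h
        · exact h
        · exfalso
          apply hx0
          funext i
          exact (Finset.sum_eq_zero_iff_of_nonneg hnn').mp h.symm i (Finset.mem_univ i)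
      have hρAs : ρA = s := by
        have h1 : ∑ i, (A *ᵥ x) i = s * ∑ i, x i := by
          have h2 : ∑ i, (A *ᵥ x) i = ∑ j, (∑ i, A i j) * x j := by
            calc ∑ i, (A *ᵥ x) i = ∑ i, ∑ j, A i j * x j := rfl
              _ = ∑ j, ∑ i, A i j * x j := Finset.sum_comm
              _ = ∑ j, (∑ i, A i j) * x j :=
                  Finset.sum_congr rfl fun j _ => by rw [Finset.sum_mul]
          rw [h2, Finset.mul_sum]
          refine Finset.sum_congr rfl fun j _ => ?_
          have h3 : ∑ i, A i j = r j := by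
            rw [hri]
            exact Finset.sum_congr rfl fun i _ => hAs i j
          rw [h3, hrc j i0, ← hsdef]
        have h4 : ∑ i, (A *ᵥ x) i = ρA * ∑ i, x i := by
          rw [hPer, Finset.mul_sum]
          rfl
        rw [h4] at h1
        exact mul_right_cancel₀ (ne_of_gt hsumx) h1
      -- upper bound for ρB
      have hvBdiag : diagonal r *ᵥ vB = s • vB := by
        funext i
        have h1 : (diagonal r *ᵥ vB) i = r i * vB i := mulVec_diagonal r vB i
        rw [h1, hrc i i0, ← hsdef]
        rfl
      have hAvB : A *ᵥ vB = ((νB - s) / c) • vB := by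
        have h1 := hνB
        rw [hBdef, add_mulVec, hvBdiag, smul_mulVec] at h1
        funext i
        have h2 := congrFun h1 i
        simp only [Pi.add_apply, Pi.smul_apply, smul_eq_mul] at h2 ⊢
        field_simp
        linarith
      have hμB : |(νB - s) / c| ≤ ρA := hubA _ _ hvB0 hAvB
      have hρBle : ρB ≤ (1 + c) * ρA := by
        rw [abs_div, abs_of_pos hc, div_le_iff₀ hc] at hμB
        have h5 : |νB| ≤ |νB - s| + |s| := by
          calc |νB| = |(νB - s) + s| := by ring_nf
            _ ≤ |νB - s| + |s| := abs_add_le _ _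
        rw [abs_of_nonneg hs0, hνBa] at h5
        have h6 : ρA = s := hρAs
        linarith
      rw [hρA, hρB, hpc]
      linarith
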